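/- (Modulational expansion of the coefficient III.) Let g > 0, k₀ > 0, and χⱼ = (λⱼ, μⱼ) ∈ ℝ², j = 1,…,4, be fixed. Substitute k₁ = (k₀,0)+εχ₁, k₂ = (k₀,0)+εχ₂, k₃ = −((k₀,0)+εχ₃), k₄ = −((k₀,0)+εχ₄) into the coefficient III(k₁,k₂,k₃,k₄). Then, as ε → 0⁺, III = −(√2 + 1)·(k₀³/(16π²))·( 1 + (3ε/(4k₀))(λ₁+λ₂+λ₃+λ₄) ) + O(ε²). -/

import Mathlib

open Asymptotics Filter Topology

/-- Euclidean norm on ℝ². -/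
noncomputable def norm2 (k : ℝ × ℝ) : ℝ := Real.sqrt (k.1 ^ 2 + k.2 ^ 2)

/-- Euclidean inner product on ℝ². -/
def dot (a b : ℝ × ℝ) : ℝ := a.1 * b.1 + a.2 * b.2

/-- Deep-water dispersion relation ω(k) = √(g‖k‖). -/
noncomputable def omg (g : ℝ) (k : ℝ × ℝ) : ℝ := Real.sqrt (g * norm2 k)

/-- ℓ_a^b = (‖a‖‖b‖ + a·b)/√(‖a‖‖b‖). -/
noncomputable def ell (a b : ℝ × ℝ) : ℝ :=
  (norm2 a * norm2 b + dot a b) / Real.sqrt (norm2 a * norm2 b)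

/-- The coefficient III of Proposition 4.3. -/
noncomputable def coefIII (g : ℝ) (k₁ k₂ k₃ k₄ : ℝ × ℝ) : ℝ :=
  -(Real.sqrt g / (128 * Real.pi ^ 2)) *
    (norm2 k₁ * norm2 k₂ * norm2 k₃ * norm2 k₄ * norm2 (k₁ + k₂) * norm2 (k₃ + k₄)) ^
      ((1 : ℝ) / 4) *
    (ell (k₁ + k₂) (-k₁) + ell (k₁ + k₂) (-k₂) - ell k₁ k₂) *
    (ell (k₃ + k₄) (-k₃) + ell (k₃ + k₄) (-k₄) - ell k₃ k₄) *
    (1 / (omg g k₁ + omg g k₂ - omg g (k₁ + k₂))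
      + 1 / (omg g k₃ + omg g k₄ - omg g (k₃ + k₄)))

section Helpers

open Set


lemma isBigO_quadratic {f : ℝ → ℝ} {c₀ c₁ : ℝ} (hf : ContDiffAt ℝ 2 f 0)
    (h0 : f 0 = c₀) (h1 : deriv f 0 = c₁) :
    (fun x => f x - (c₀ + c₁ * x)) =O[𝓝[>] (0:ℝ)] fun x => x ^ 2 := by
  obtain ⟨u, hu, hCD⟩ := hf.contDiffOn le_rfl (by simp)
  obtain ⟨r, hr, hball⟩ := Metric.mem_nhds_iff.1 hu
  set b := r/2 with hb
  have h0b : (0:ℝ) < b := by positivity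
  have hsub : Icc (0:ℝ) b ⊆ u := by
    intro x hx
    apply hball
    simp only [Metric.mem_ball, Real.dist_eq, sub_zero]
    rw [abs_of_nonneg hx.1]
    linarith [hx.2]
  have hf2 : ContDiffOn ℝ 2 f (Icc 0 b) := hCD.mono hsub
  have hud : UniqueDiffOn ℝ (Icc (0:ℝ) b) := uniqueDiffOn_Icc h0b
  have hcont : ContinuousOn (fun y => ‖iteratedDerivWithin 2 f (Icc 0 b) y‖) (Icc 0 b) :=
    (hf2.continuousOn_iteratedDerivWithin le_rfl hud).norm
  obtain ⟨C, hC⟩ := (isCompact_Icc).exists_bound_of_continuousOn hcont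
  have hder : derivWithin f (Icc 0 b) 0 = c₁ := by
    rw [DifferentiableAt.derivWithin (hf.differentiableAt (by norm_num)) (hud 0 (by simp [h0b.le]))]
    exact h1
  have key : ∀ x ∈ Icc (0:ℝ) b, ‖f x - taylorWithinEval f 1 (Icc 0 b) 0 x‖ ≤ C * (x - 0)^2 / Nat.factorial 1 := by
    intro x hx
    exact taylor_mean_remainder_bound (n := 1) h0b.le (by exact_mod_cast hf2) hx (fun y hy => by simpa using hC _ hy)
  have htay : ∀ x : ℝ, taylorWithinEval f 1 (Icc 0 b) 0 x = c₀ + c₁ * x := by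
    intro x
    rw [taylorWithinEval_succ, taylor_within_zero_eval]
    rw [iteratedDerivWithin_one]
    simp [hder, h0, mul_comm]
  rw [isBigO_iff]
  refine ⟨C, ?_⟩
  filter_upwards [Ioc_mem_nhdsGT_of_mem ⟨le_refl (0:ℝ), h0b⟩] with x hx
  have := key x ⟨hx.1.le, hx.2⟩
  rw [htay] at this
  simp only [Nat.factorial_one, Nat.cast_one, mul_div_assoc] at this
  simpa [abs_of_nonneg (sq_nonneg x), Real.norm_eq_abs] using this


noncomputable def q (c l m ε : ℝ) : ℝ := Real.sqrt ((c + ε*l)^2 + (ε*m)^2)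

lemma q_zero {c : ℝ} (l m : ℝ) (hc : 0 ≤ c) : q c l m 0 = c := by
  simp [q, Real.sqrt_sq hc]

lemma q_arg_pos {c : ℝ} (l m : ℝ) (hc : 0 < c) : 0 < (c + 0*l)^2 + (0*m)^2 := by
  norm_num; positivity

lemma hasDerivAt_affine (a b : ℝ) : HasDerivAt (fun ε : ℝ => a + ε*b) b 0 := by
  simpa using (((hasDerivAt_id (0:ℝ)).mul_const b).const_add a)

lemma hasDerivAt_qarg (c l m : ℝ) :
    HasDerivAt (fun ε : ℝ => (c + ε*l)^2 + (ε*m)^2) (2*c*l) 0 := by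
  have h1 := ((hasDerivAt_affine c l).pow 2).add ((hasDerivAt_affine 0 m).pow 2)
  norm_num at h1
  first
  | exact h1
  | · convert h1 using 1; ring

lemma hasDerivAt_q {c : ℝ} (l m : ℝ) (hc : 0 < c) : HasDerivAt (q c l m) l 0 := by
  have h := (hasDerivAt_qarg c l m).sqrt (by have := q_arg_pos l m hc; positivity)
  have hv : (c + 0*l)^2 + (0*m)^2 = c^2 := by ring
  rw [hv, Real.sqrt_sq hc.le] at h
  convert h using 1
  · rfl
  · field_simp

lemma contDiffAt_q {c : ℝ} (l m : ℝ) (hc : 0 < c) : ContDiffAt ℝ 2 (q c l m) 0 := by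
  apply ContDiffAt.sqrt _ (by have := q_arg_pos l m hc; positivity)
  apply ContDiffAt.add
  · exact ((contDiffAt_const.add (contDiffAt_id.mul contDiffAt_const)).pow 2)
  · exact ((contDiffAt_id.mul contDiffAt_const).pow 2)

lemma hasDerivAt_poly2 (a b c d e f : ℝ) :
    HasDerivAt (fun ε : ℝ => (a+ε*b)*(c+ε*d) + (ε*e)*(ε*f)) (a*d+b*c) 0 := by
  have h := ((hasDerivAt_affine a b).mul (hasDerivAt_affine c d)).add
    ((hasDerivAt_affine 0 e).mul (hasDerivAt_affine 0 f))
  norm_num at h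
  first
  | exact h
  | · exact h.congr_deriv (by ring)

lemma contDiffAt_poly2 (a b c d e f : ℝ) :
    ContDiffAt ℝ 2 (fun ε : ℝ => (a+ε*b)*(c+ε*d) + (ε*e)*(ε*f)) 0 := by
  apply ContDiffAt.add
  · exact (contDiffAt_const.add (contDiffAt_id.mul contDiffAt_const)).mul
      (contDiffAt_const.add (contDiffAt_id.mul contDiffAt_const))
  · exact (contDiffAt_id.mul contDiffAt_const).mul (contDiffAt_id.mul contDiffAt_const)

lemma hasDerivAt_ellpart {X Y D : ℝ → ℝ} {X' Y' D' x y d v : ℝ}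
    (hX : HasDerivAt X X' 0) (hY : HasDerivAt Y Y' 0) (hD : HasDerivAt D D' 0)
    (hx : X 0 = x) (hy : Y 0 = y) (hd : D 0 = d) (hxy : 0 < x*y)
    (hval : ((X'*y + x*Y' + D') * Real.sqrt (x*y)
        - (x*y + d) * ((X'*y + x*Y')/(2*Real.sqrt (x*y)))) / (Real.sqrt (x*y))^2 = v) :
    HasDerivAt (fun ε => (X ε * Y ε + D ε)/Real.sqrt (X ε * Y ε)) v 0 := by
  have hnum : HasDerivAt (fun ε => X ε * Y ε + D ε) (X'*y + x*Y' + D') 0 := by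
    have := (hX.mul hY).add hD
    rwa [hx, hy] at this
  have hden : HasDerivAt (fun ε => Real.sqrt (X ε * Y ε)) ((X'*y + x*Y')/(2*Real.sqrt (x*y))) 0 := by
    have := (hX.mul hY).sqrt (by simp only [Pi.mul_apply]; rw [hx, hy]; exact hxy.ne')
    simp only [Pi.mul_apply] at this
    rwa [hx, hy] at this
  have h := hnum.div hden (by rw [hx, hy]; positivity)
  rw [hx, hy, hd, hval] at h
  exact h

lemma contDiffAt_ellpart {X Y D : ℝ → ℝ}
    (hX : ContDiffAt ℝ 2 X 0) (hY : ContDiffAt ℝ 2 Y 0) (hD : ContDiffAt ℝ 2 D 0)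
    (hxy : 0 < X 0 * Y 0) :
    ContDiffAt ℝ 2 (fun ε => (X ε * Y ε + D ε)/Real.sqrt (X ε * Y ε)) 0 := by
  refine ContDiffAt.div ((hX.mul hY).add hD) ((hX.mul hY).sqrt hxy.ne') (by positivity)

/-- The bracket ℓ_{a+b}^{-a} + ℓ_{a+b}^{-b} - ℓ_a^b in scalar form. -/
noncomputable def brkt (k0 la ma lb mb ε : ℝ) : ℝ :=
  (q (2*k0) (la+lb) (ma+mb) ε * q k0 la ma ε
      + -((2*k0+ε*(la+lb))*(k0+ε*la) + (ε*(ma+mb))*(ε*ma)))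
    / Real.sqrt (q (2*k0) (la+lb) (ma+mb) ε * q k0 la ma ε)
  + (q (2*k0) (la+lb) (ma+mb) ε * q k0 lb mb ε
      + -((2*k0+ε*(la+lb))*(k0+ε*lb) + (ε*(ma+mb))*(ε*mb)))
    / Real.sqrt (q (2*k0) (la+lb) (ma+mb) ε * q k0 lb mb ε)
  - (q k0 la ma ε * q k0 lb mb ε + ((k0+ε*la)*(k0+ε*lb) + (ε*ma)*(ε*mb)))
    / Real.sqrt (q k0 la ma ε * q k0 lb mb ε)

lemma brkt_zero {k0 : ℝ} (la ma lb mb : ℝ) (hk : 0 < k0) :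
    brkt k0 la ma lb mb 0 = -(2*k0) := by
  simp only [brkt, q_zero _ _ hk.le, q_zero _ _ (by linarith : (0:ℝ) ≤ 2*k0)]
  rw [Real.sqrt_mul_self hk.le]
  have h2k : (0:ℝ) < 2*k0*k0 := by positivity
  norm_num
  field_simp
  ring

lemma hasDerivAt_brkt {k0 : ℝ} (la ma lb mb : ℝ) (hk : 0 < k0) :
    HasDerivAt (brkt k0 la ma lb mb) (-(la+lb)) 0 := by
  have h2k : (0:ℝ) < 2*k0 := by linarith
  have hQ := hasDerivAt_q (la+lb) (ma+mb) h2k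
  have hqa := hasDerivAt_q la ma hk
  have hqb := hasDerivAt_q lb mb hk
  have hsq : (0:ℝ) < Real.sqrt (2*k0*k0) := Real.sqrt_pos.2 (by positivity)
  have e1 : HasDerivAt (fun ε => (q (2*k0) (la+lb) (ma+mb) ε * q k0 la ma ε
      + -((2*k0+ε*(la+lb))*(k0+ε*la) + (ε*(ma+mb))*(ε*ma)))
    / Real.sqrt (q (2*k0) (la+lb) (ma+mb) ε * q k0 la ma ε)) 0 0 := by
    refine hasDerivAt_ellpart (d := -(2*k0*k0)) hQ hqa
      ((hasDerivAt_poly2 (2*k0) (la+lb) k0 la (ma+mb) ma).neg)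
      (q_zero _ _ h2k.le) (q_zero _ _ hk.le) (by norm_num) (by positivity) ?_
    field_simp
    ring
  have e2 : HasDerivAt (fun ε => (q (2*k0) (la+lb) (ma+mb) ε * q k0 lb mb ε
      + -((2*k0+ε*(la+lb))*(k0+ε*lb) + (ε*(ma+mb))*(ε*mb)))
    / Real.sqrt (q (2*k0) (la+lb) (ma+mb) ε * q k0 lb mb ε)) 0 0 := by
    refine hasDerivAt_ellpart (d := -(2*k0*k0)) hQ hqb
      ((hasDerivAt_poly2 (2*k0) (la+lb) k0 lb (ma+mb) mb).neg)
      (q_zero _ _ h2k.le) (q_zero _ _ hk.le) (by norm_num) (by positivity) ?_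
    field_simp
    ring
  have e3 : HasDerivAt (fun ε => (q k0 la ma ε * q k0 lb mb ε
      + ((k0+ε*la)*(k0+ε*lb) + (ε*ma)*(ε*mb)))
    / Real.sqrt (q k0 la ma ε * q k0 lb mb ε)) (la+lb) 0 := by
    refine hasDerivAt_ellpart (d := k0*k0) hqa hqb (hasDerivAt_poly2 k0 la k0 lb ma mb)
      (q_zero _ _ hk.le) (q_zero _ _ hk.le) (by norm_num) (by positivity) ?_
    rw [Real.sqrt_mul_self hk.le]
    field_simp
    ring
  have h := (e1.add e2).sub e3
  have heq : (0:ℝ) + 0 - (la+lb) = -(la+lb) := by ring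
  rw [heq] at h
  exact h

lemma contDiffAt_brkt {k0 : ℝ} (la ma lb mb : ℝ) (hk : 0 < k0) :
    ContDiffAt ℝ 2 (brkt k0 la ma lb mb) 0 := by
  have h2k : (0:ℝ) < 2*k0 := by linarith
  have hQ := contDiffAt_q (la+lb) (ma+mb) h2k
  have hqa := contDiffAt_q la ma hk
  have hqb := contDiffAt_q lb mb hk
  unfold brkt
  apply ContDiffAt.sub
  apply ContDiffAt.add
  · exact contDiffAt_ellpart hQ hqa (contDiffAt_poly2 (2*k0) (la+lb) k0 la (ma+mb) ma).neg
      (by simp only [q_zero _ _ h2k.le, q_zero _ _ hk.le]; positivity)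
  · exact contDiffAt_ellpart hQ hqb (contDiffAt_poly2 (2*k0) (la+lb) k0 lb (ma+mb) mb).neg
      (by simp only [q_zero _ _ h2k.le, q_zero _ _ hk.le]; positivity)
  · exact contDiffAt_ellpart hqa hqb (contDiffAt_poly2 k0 la k0 lb ma mb)
      (by simp only [q_zero _ _ hk.le]; positivity)

/-- scalar dispersion denominator -/
noncomputable def disp (g k0 la ma lb mb ε : ℝ) : ℝ :=
  Real.sqrt (g * q k0 la ma ε) + Real.sqrt (g * q k0 lb mb ε)
    - Real.sqrt (g * q (2*k0) (la+lb) (ma+mb) ε)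

lemma disp_zero {g k0 : ℝ} (la ma lb mb : ℝ) (hk : 0 < k0) :
    disp g k0 la ma lb mb 0 = 2*Real.sqrt (g*k0) - Real.sqrt (g*(2*k0)) := by
  have h2k : (0:ℝ) < 2*k0 := by linarith
  simp only [disp, q_zero _ _ hk.le, q_zero _ _ h2k.le]
  ring

lemma disp0_pos {g k0 : ℝ} (hg : 0 < g) (hk : 0 < k0) :
    0 < 2*Real.sqrt (g*k0) - Real.sqrt (g*(2*k0)) := by
  have h1 : Real.sqrt (g*(2*k0)) < Real.sqrt (2^2*(g*k0)) := by
    apply Real.sqrt_lt_sqrt (by positivity)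
    nlinarith [mul_pos hg hk]
  rw [Real.sqrt_mul (by norm_num : (0:ℝ) ≤ 2^2), Real.sqrt_sq (by norm_num : (0:ℝ) ≤ 2)] at h1
  linarith

lemma hasDerivAt_disp {g k0 : ℝ} (la ma lb mb : ℝ) (hg : 0 < g) (hk : 0 < k0) :
    HasDerivAt (disp g k0 la ma lb mb)
      (g*la/(2*Real.sqrt (g*k0)) + g*lb/(2*Real.sqrt (g*k0))
        - g*(la+lb)/(2*Real.sqrt (g*(2*k0)))) 0 := by
  have h2k : (0:ℝ) < 2*k0 := by linarith
  have h1 := (((hasDerivAt_q la ma hk).const_mul g).sqrt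
    (by simp only [q_zero _ _ hk.le]; positivity))
  have h2 := (((hasDerivAt_q lb mb hk).const_mul g).sqrt
    (by simp only [q_zero _ _ hk.le]; positivity))
  have h3 := (((hasDerivAt_q (la+lb) (ma+mb) h2k).const_mul g).sqrt
    (by simp only [q_zero _ _ h2k.le]; positivity))
  simp only [q_zero _ _ hk.le, q_zero _ _ h2k.le] at h1 h2 h3
  exact (h1.add h2).sub h3

lemma contDiffAt_disp {g k0 : ℝ} (la ma lb mb : ℝ) (hg : 0 < g) (hk : 0 < k0) :
    ContDiffAt ℝ 2 (disp g k0 la ma lb mb) 0 := by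
  have h2k : (0:ℝ) < 2*k0 := by linarith
  have h1 := ((contDiffAt_const (c := g)).mul (contDiffAt_q la ma hk)).sqrt
    (by simp only [q_zero _ _ hk.le]; positivity)
  have h2 := ((contDiffAt_const (c := g)).mul (contDiffAt_q lb mb hk)).sqrt
    (by simp only [q_zero _ _ hk.le]; positivity)
  have h3 := ((contDiffAt_const (c := g)).mul (contDiffAt_q (la+lb) (ma+mb) h2k)).sqrt
    (by simp only [q_zero _ _ h2k.le]; positivity)
  exact (h1.add h2).sub h3

noncomputable def prod6 (k0 l1 m1 l2 m2 l3 m3 l4 m4 ε : ℝ) : ℝ :=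
  q k0 l1 m1 ε * q k0 l2 m2 ε * q k0 l3 m3 ε * q k0 l4 m4 ε
    * q (2*k0) (l1+l2) (m1+m2) ε * q (2*k0) (l3+l4) (m3+m4) ε

lemma prod6_zero {k0 : ℝ} (l1 m1 l2 m2 l3 m3 l4 m4 : ℝ) (hk : 0 < k0) :
    prod6 k0 l1 m1 l2 m2 l3 m3 l4 m4 0 = 4*k0^6 := by
  have h2k : (0:ℝ) < 2*k0 := by linarith
  simp only [prod6, q_zero _ _ hk.le, q_zero _ _ h2k.le]
  ring

lemma hasDerivAt_prod6 {k0 : ℝ} (l1 m1 l2 m2 l3 m3 l4 m4 : ℝ) (hk : 0 < k0) :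
    HasDerivAt (prod6 k0 l1 m1 l2 m2 l3 m3 l4 m4) (6*k0^5*(l1+l2+l3+l4)) 0 := by
  have h2k : (0:ℝ) < 2*k0 := by linarith
  have h := (((((hasDerivAt_q l1 m1 hk).mul (hasDerivAt_q l2 m2 hk)).mul
    (hasDerivAt_q l3 m3 hk)).mul (hasDerivAt_q l4 m4 hk)).mul
    (hasDerivAt_q (l1+l2) (m1+m2) h2k)).mul (hasDerivAt_q (l3+l4) (m3+m4) h2k)
  simp only [Pi.mul_apply, q_zero _ _ hk.le, q_zero _ _ h2k.le] at h
  have : HasDerivAt (prod6 k0 l1 m1 l2 m2 l3 m3 l4 m4) _ 0 := h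
  convert this using 1
  ring

lemma contDiffAt_prod6 {k0 : ℝ} (l1 m1 l2 m2 l3 m3 l4 m4 : ℝ) (hk : 0 < k0) :
    ContDiffAt ℝ 2 (prod6 k0 l1 m1 l2 m2 l3 m3 l4 m4) 0 := by
  have h2k : (0:ℝ) < 2*k0 := by linarith
  exact (((((contDiffAt_q l1 m1 hk).mul (contDiffAt_q l2 m2 hk)).mul
    (contDiffAt_q l3 m3 hk)).mul (contDiffAt_q l4 m4 hk)).mul
    (contDiffAt_q (l1+l2) (m1+m2) h2k)).mul (contDiffAt_q (l3+l4) (m3+m4) h2k)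

lemma rpow_prod6_zero {k0 : ℝ} (hk : 0 < k0) :
    (4*k0^6 : ℝ) ^ ((1:ℝ)/4) = Real.sqrt 2 * (k0 * Real.sqrt k0) := by
  have h2 : Real.sqrt 2 ^ 2 = 2 := Real.sq_sqrt (by norm_num)
  have hkk : Real.sqrt k0 ^ 2 = k0 := Real.sq_sqrt hk.le
  have he : (4*k0^6 : ℝ) = (Real.sqrt 2 * (k0 * Real.sqrt k0))^(4:ℕ) := by
    have e : (Real.sqrt 2 * (k0 * Real.sqrt k0))^(4:ℕ)
        = (Real.sqrt 2 ^2)^2 * ((Real.sqrt k0 ^2)^2 * k0^4) := by ring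
    rw [e, h2, hkk]; ring
  rw [he, show ((1:ℝ)/4) = ((4:ℕ) : ℝ)⁻¹ by norm_num,
    Real.pow_rpow_inv_natCast (by positivity) (by norm_num)]

lemma sqrt_g2k {g k0 : ℝ} (hg : 0 < g) :
    Real.sqrt (g*(2*k0)) = Real.sqrt 2 * Real.sqrt (g*k0) := by
  rw [show g*(2*k0) = 2*(g*k0) by ring, Real.sqrt_mul (by norm_num : (0:ℝ) ≤ 2)]

lemma value_identity (g k0 : ℝ) (hg : 0 < g) (hk : 0 < k0) :
    -(Real.sqrt g/(128*Real.pi^2)) * (4*k0^6 : ℝ) ^ ((1:ℝ)/4) * -(2*k0) * -(2*k0) *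
      (1/(2*Real.sqrt (g*k0) - Real.sqrt (g*(2*k0)))
        + 1/(2*Real.sqrt (g*k0) - Real.sqrt (g*(2*k0))))
    = -(Real.sqrt 2 + 1) * (k0^3/(16*Real.pi^2)) := by
  have hD := disp0_pos hg hk
  have hs2 : Real.sqrt 2 ^ 2 = 2 := Real.sq_sqrt (by norm_num)
  have hs : Real.sqrt g * Real.sqrt k0 = Real.sqrt (g*k0) := (Real.sqrt_mul hg.le k0).symm
  have hπ : Real.pi ≠ 0 := Real.pi_ne_zero
  rw [rpow_prod6_zero hk, sqrt_g2k hg, ← hs]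
  have ha : (0:ℝ) < Real.sqrt g := Real.sqrt_pos.2 hg
  have hb : (0:ℝ) < Real.sqrt k0 := Real.sqrt_pos.2 hk
  rw [sqrt_g2k hg, ← hs] at hD
  have h2s : (2:ℝ) - Real.sqrt 2 ≠ 0 := by nlinarith
  field_simp
  linear_combination (-128:ℝ) * hs2

set_option maxHeartbeats 2000000 in
lemma deriv_identity (g k₀ : ℝ) (hg : 0 < g) (hk₀ : 0 < k₀) (l1 m1 l2 m2 l3 m3 l4 m4 : ℝ) :
    deriv (fun ε => -(Real.sqrt g/(128*Real.pi^2)) * prod6 k₀ l1 m1 l2 m2 l3 m3 l4 m4 ε ^ ((1:ℝ)/4)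
      * brkt k₀ l1 m1 l2 m2 ε * brkt k₀ l3 m3 l4 m4 ε
      * (1/disp g k₀ l1 m1 l2 m2 ε + 1/disp g k₀ l3 m3 l4 m4 ε)) 0
    = -(Real.sqrt 2 + 1) * (k₀^3/(16*Real.pi^2)) * (3*(l1+l2+l3+l4)/(4*k₀)) := by
  have hP0 : prod6 k₀ l1 m1 l2 m2 l3 m3 l4 m4 0 = 4*k₀^6 := prod6_zero _ _ _ _ _ _ _ _ hk₀
  have hD0 := disp0_pos hg hk₀
  have hDne : (2*Real.sqrt (g*k₀) - Real.sqrt (g*(2*k₀))) ≠ 0 := hD0.ne'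
  have hR := (hasDerivAt_prod6 l1 m1 l2 m2 l3 m3 l4 m4 hk₀).rpow_const (p := (1:ℝ)/4)
    (Or.inl (by rw [hP0]; positivity))
  have hB1 := hasDerivAt_brkt l1 m1 l2 m2 hk₀
  have hB2 := hasDerivAt_brkt l3 m3 l4 m4 hk₀
  have hd1 := hasDerivAt_disp l1 m1 l2 m2 hg hk₀
  have hd2 := hasDerivAt_disp l3 m3 l4 m4 hg hk₀
  have hne1 : disp g k₀ l1 m1 l2 m2 0 ≠ 0 := by rw [disp_zero _ _ _ _ hk₀]; exact hDne
  have hne2 : disp g k₀ l3 m3 l4 m4 0 ≠ 0 := by rw [disp_zero _ _ _ _ hk₀]; exact hDne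
  have hi1 := (hasDerivAt_const (0:ℝ) (1:ℝ)).div hd1 hne1
  have hi2 := (hasDerivAt_const (0:ℝ) (1:ℝ)).div hd2 hne2
  have hF := (((hR.const_mul (-(Real.sqrt g/(128*Real.pi^2)))).mul hB1).mul hB2).mul (hi1.add hi2)
  have hF' : HasDerivAt (fun ε => -(Real.sqrt g/(128*Real.pi^2)) * prod6 k₀ l1 m1 l2 m2 l3 m3 l4 m4 ε ^ ((1:ℝ)/4)
      * brkt k₀ l1 m1 l2 m2 ε * brkt k₀ l3 m3 l4 m4 ε
      * (1/disp g k₀ l1 m1 l2 m2 ε + 1/disp g k₀ l3 m3 l4 m4 ε)) _ 0 := hF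
  rw [hF'.deriv]
  simp only [Pi.mul_apply, Pi.div_apply, Pi.add_apply, brkt_zero _ _ _ _ hk₀, disp_zero _ _ _ _ hk₀, hP0]
  rw [show ((4:ℝ)*k₀^6) ^ ((1:ℝ)/4 - 1) = (Real.sqrt 2 * (k₀ * Real.sqrt k₀))/(4*k₀^6) by
    rw [Real.rpow_sub (by positivity), Real.rpow_one, rpow_prod6_zero hk₀]]
  rw [rpow_prod6_zero hk₀]
  have hs : Real.sqrt g * Real.sqrt k₀ = Real.sqrt (g*k₀) := (Real.sqrt_mul hg.le k₀).symm
  rw [sqrt_g2k hg, ← hs] at hDne ⊢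
  have hs2 : Real.sqrt 2 ^ 2 = 2 := Real.sq_sqrt (by norm_num)
  have hg2 : Real.sqrt g ^ 2 = g := Real.sq_sqrt hg.le
  have hk2 : Real.sqrt k₀ ^ 2 = k₀ := Real.sq_sqrt hk₀.le
  have ha : (0:ℝ) < Real.sqrt g := Real.sqrt_pos.2 hg
  have hb : (0:ℝ) < Real.sqrt k₀ := Real.sqrt_pos.2 hk₀
  have hπ : Real.pi ≠ 0 := Real.pi_ne_zero
  have h2s : (2:ℝ) - Real.sqrt 2 ≠ 0 := by nlinarith
  field_simp
  have hp1 : Real.sqrt 2^3 = (2)^1 * Real.sqrt 2 := by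
    have e : Real.sqrt 2^3 = (Real.sqrt 2^2)^1 * Real.sqrt 2 := by ring
    rw [e, hs2]
  have hp2 : Real.sqrt 2^4 = (2)^2 := by
    have e : Real.sqrt 2^4 = (Real.sqrt 2^2)^2 := by ring
    rw [e, hs2]
  have hp3 : Real.sqrt 2^5 = (2)^2 * Real.sqrt 2 := by
    have e : Real.sqrt 2^5 = (Real.sqrt 2^2)^2 * Real.sqrt 2 := by ring
    rw [e, hs2]
  have hp4 : Real.sqrt 2^6 = (2)^3 := by
    have e : Real.sqrt 2^6 = (Real.sqrt 2^2)^3 := by ring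
    rw [e, hs2]
  have hp5 : Real.sqrt 2^7 = (2)^3 * Real.sqrt 2 := by
    have e : Real.sqrt 2^7 = (Real.sqrt 2^2)^3 * Real.sqrt 2 := by ring
    rw [e, hs2]
  have hp6 : Real.sqrt 2^8 = (2)^4 := by
    have e : Real.sqrt 2^8 = (Real.sqrt 2^2)^4 := by ring
    rw [e, hs2]
  have hp7 : Real.sqrt 2^9 = (2)^4 * Real.sqrt 2 := by
    have e : Real.sqrt 2^9 = (Real.sqrt 2^2)^4 * Real.sqrt 2 := by ring
    rw [e, hs2]
  have hp8 : Real.sqrt 2^10 = (2)^5 := by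
    have e : Real.sqrt 2^10 = (Real.sqrt 2^2)^5 := by ring
    rw [e, hs2]
  have hp9 : Real.sqrt 2^11 = (2)^5 * Real.sqrt 2 := by
    have e : Real.sqrt 2^11 = (Real.sqrt 2^2)^5 * Real.sqrt 2 := by ring
    rw [e, hs2]
  have hp10 : Real.sqrt 2^12 = (2)^6 := by
    have e : Real.sqrt 2^12 = (Real.sqrt 2^2)^6 := by ring
    rw [e, hs2]
  have hp11 : Real.sqrt g^3 = (g)^1 * Real.sqrt g := by
    have e : Real.sqrt g^3 = (Real.sqrt g^2)^1 * Real.sqrt g := by ring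
    rw [e, hg2]
  have hp12 : Real.sqrt g^4 = (g)^2 := by
    have e : Real.sqrt g^4 = (Real.sqrt g^2)^2 := by ring
    rw [e, hg2]
  have hp13 : Real.sqrt g^5 = (g)^2 * Real.sqrt g := by
    have e : Real.sqrt g^5 = (Real.sqrt g^2)^2 * Real.sqrt g := by ring
    rw [e, hg2]
  have hp14 : Real.sqrt g^6 = (g)^3 := by
    have e : Real.sqrt g^6 = (Real.sqrt g^2)^3 := by ring
    rw [e, hg2]
  have hp15 : Real.sqrt g^7 = (g)^3 * Real.sqrt g := by
    have e : Real.sqrt g^7 = (Real.sqrt g^2)^3 * Real.sqrt g := by ring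
    rw [e, hg2]
  have hp16 : Real.sqrt g^8 = (g)^4 := by
    have e : Real.sqrt g^8 = (Real.sqrt g^2)^4 := by ring
    rw [e, hg2]
  have hp17 : Real.sqrt g^9 = (g)^4 * Real.sqrt g := by
    have e : Real.sqrt g^9 = (Real.sqrt g^2)^4 * Real.sqrt g := by ring
    rw [e, hg2]
  have hp18 : Real.sqrt g^10 = (g)^5 := by
    have e : Real.sqrt g^10 = (Real.sqrt g^2)^5 := by ring
    rw [e, hg2]
  have hp19 : Real.sqrt g^11 = (g)^5 * Real.sqrt g := by
    have e : Real.sqrt g^11 = (Real.sqrt g^2)^5 * Real.sqrt g := by ring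
    rw [e, hg2]
  have hp20 : Real.sqrt g^12 = (g)^6 := by
    have e : Real.sqrt g^12 = (Real.sqrt g^2)^6 := by ring
    rw [e, hg2]
  have hp21 : Real.sqrt k₀^3 = (k₀)^1 * Real.sqrt k₀ := by
    have e : Real.sqrt k₀^3 = (Real.sqrt k₀^2)^1 * Real.sqrt k₀ := by ring
    rw [e, hk2]
  have hp22 : Real.sqrt k₀^4 = (k₀)^2 := by
    have e : Real.sqrt k₀^4 = (Real.sqrt k₀^2)^2 := by ring
    rw [e, hk2]
  have hp23 : Real.sqrt k₀^5 = (k₀)^2 * Real.sqrt k₀ := by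
    have e : Real.sqrt k₀^5 = (Real.sqrt k₀^2)^2 * Real.sqrt k₀ := by ring
    rw [e, hk2]
  have hp24 : Real.sqrt k₀^6 = (k₀)^3 := by
    have e : Real.sqrt k₀^6 = (Real.sqrt k₀^2)^3 := by ring
    rw [e, hk2]
  have hp25 : Real.sqrt k₀^7 = (k₀)^3 * Real.sqrt k₀ := by
    have e : Real.sqrt k₀^7 = (Real.sqrt k₀^2)^3 * Real.sqrt k₀ := by ring
    rw [e, hk2]
  have hp26 : Real.sqrt k₀^8 = (k₀)^4 := by
    have e : Real.sqrt k₀^8 = (Real.sqrt k₀^2)^4 := by ring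
    rw [e, hk2]
  have hp27 : Real.sqrt k₀^9 = (k₀)^4 * Real.sqrt k₀ := by
    have e : Real.sqrt k₀^9 = (Real.sqrt k₀^2)^4 * Real.sqrt k₀ := by ring
    rw [e, hk2]
  have hp28 : Real.sqrt k₀^10 = (k₀)^5 := by
    have e : Real.sqrt k₀^10 = (Real.sqrt k₀^2)^5 := by ring
    rw [e, hk2]
  have hp29 : Real.sqrt k₀^11 = (k₀)^5 * Real.sqrt k₀ := by
    have e : Real.sqrt k₀^11 = (Real.sqrt k₀^2)^5 * Real.sqrt k₀ := by ring
    rw [e, hk2]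
  have hp30 : Real.sqrt k₀^12 = (k₀)^6 := by
    have e : Real.sqrt k₀^12 = (Real.sqrt k₀^2)^6 := by ring
    rw [e, hk2]
  ring_nf
  simp only [hs2, hg2, hk2, hp1, hp2, hp3, hp4, hp5, hp6, hp7, hp8, hp9, hp10, hp11, hp12, hp13, hp14, hp15, hp16, hp17, hp18, hp19, hp20, hp21, hp22, hp23, hp24, hp25, hp26, hp27, hp28, hp29, hp30]
  ring_nf

set_option maxHeartbeats 4000000 in
set_option maxRecDepth 100000 in
lemma coefIII_eq_scalar (g k₀ : ℝ) (l1 m1 l2 m2 l3 m3 l4 m4 : ℝ) (ε : ℝ) :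
    coefIII g ((k₀, 0) + ε • (l1,m1)) ((k₀, 0) + ε • (l2,m2))
      (-((k₀, 0) + ε • (l3,m3))) (-((k₀, 0) + ε • (l4,m4)))
    = -(Real.sqrt g/(128*Real.pi^2)) * prod6 k₀ l1 m1 l2 m2 l3 m3 l4 m4 ε ^ ((1:ℝ)/4)
      * brkt k₀ l1 m1 l2 m2 ε * brkt k₀ l3 m3 l4 m4 ε
      * (1/disp g k₀ l1 m1 l2 m2 ε + 1/disp g k₀ l3 m3 l4 m4 ε) := by
  simp only [coefIII, ell, omg, norm2, dot, prod6, brkt, disp, q, Prod.smul_mk,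
    Prod.mk_add_mk, Prod.neg_mk, smul_eq_mul]
  norm_num
  ring_nf

end Helpers

/-- Modulational expansion of the coefficient III. -/
theorem coefIII_modulational_expansion (g k₀ : ℝ) (hg : 0 < g) (hk₀ : 0 < k₀)
    (χ₁ χ₂ χ₃ χ₄ : ℝ × ℝ) :
    (fun ε : ℝ =>
        coefIII g ((k₀, 0) + ε • χ₁) ((k₀, 0) + ε • χ₂)
            (-((k₀, 0) + ε • χ₃)) (-((k₀, 0) + ε • χ₄))
          - (-(Real.sqrt 2 + 1) * (k₀ ^ 3 / (16 * Real.pi ^ 2)) *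
              (1 + 3 * ε / (4 * k₀) * (χ₁.1 + χ₂.1 + χ₃.1 + χ₄.1))))
      =O[𝓝[>] (0 : ℝ)] fun ε => ε ^ 2 := by
  obtain ⟨l1, m1⟩ := χ₁
  obtain ⟨l2, m2⟩ := χ₂
  obtain ⟨l3, m3⟩ := χ₃
  obtain ⟨l4, m4⟩ := χ₄
  have hDne : (2*Real.sqrt (g*k₀) - Real.sqrt (g*(2*k₀))) ≠ 0 := (disp0_pos hg hk₀).ne'
  have hne1 : disp g k₀ l1 m1 l2 m2 0 ≠ 0 := by rw [disp_zero _ _ _ _ hk₀]; exact hDne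
  have hne2 : disp g k₀ l3 m3 l4 m4 0 ≠ 0 := by rw [disp_zero _ _ _ _ hk₀]; exact hDne
  have hP0 : prod6 k₀ l1 m1 l2 m2 l3 m3 l4 m4 0 = 4*k₀^6 := prod6_zero _ _ _ _ _ _ _ _ hk₀
  have hCD : ContDiffAt ℝ 2 (fun ε : ℝ =>
      -(Real.sqrt g/(128*Real.pi^2)) * prod6 k₀ l1 m1 l2 m2 l3 m3 l4 m4 ε ^ ((1:ℝ)/4)
      * brkt k₀ l1 m1 l2 m2 ε * brkt k₀ l3 m3 l4 m4 ε
      * (1/disp g k₀ l1 m1 l2 m2 ε + 1/disp g k₀ l3 m3 l4 m4 ε)) 0 := by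
    refine ContDiffAt.mul (ContDiffAt.mul (ContDiffAt.mul ?_ ?_) ?_) ?_
    · exact contDiffAt_const.mul
        ((contDiffAt_prod6 l1 m1 l2 m2 l3 m3 l4 m4 hk₀).rpow_const_of_ne
          (by rw [hP0]; positivity))
    · exact contDiffAt_brkt l1 m1 l2 m2 hk₀
    · exact contDiffAt_brkt l3 m3 l4 m4 hk₀
    · exact (contDiffAt_const.div (contDiffAt_disp l1 m1 l2 m2 hg hk₀) hne1).add
        (contDiffAt_const.div (contDiffAt_disp l3 m3 l4 m4 hg hk₀) hne2)
  have h0 : (fun ε : ℝ =>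
      -(Real.sqrt g/(128*Real.pi^2)) * prod6 k₀ l1 m1 l2 m2 l3 m3 l4 m4 ε ^ ((1:ℝ)/4)
      * brkt k₀ l1 m1 l2 m2 ε * brkt k₀ l3 m3 l4 m4 ε
      * (1/disp g k₀ l1 m1 l2 m2 ε + 1/disp g k₀ l3 m3 l4 m4 ε)) 0
      = -(Real.sqrt 2 + 1) * (k₀^3/(16*Real.pi^2)) := by
    simp only [brkt_zero _ _ _ _ hk₀, disp_zero _ _ _ _ hk₀, hP0]
    exact value_identity g k₀ hg hk₀
  have h1 := deriv_identity g k₀ hg hk₀ l1 m1 l2 m2 l3 m3 l4 m4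
  have main := isBigO_quadratic hCD h0 h1
  have hfun : (fun ε : ℝ =>
        coefIII g ((k₀, 0) + ε • (l1,m1)) ((k₀, 0) + ε • (l2,m2))
            (-((k₀, 0) + ε • (l3,m3))) (-((k₀, 0) + ε • (l4,m4)))
          - (-(Real.sqrt 2 + 1) * (k₀ ^ 3 / (16 * Real.pi ^ 2)) *
              (1 + 3 * ε / (4 * k₀) * ((l1,m1).1 + (l2,m2).1 + (l3,m3).1 + (l4,m4).1))))
      = (fun ε : ℝ =>
        (-(Real.sqrt g/(128*Real.pi^2)) * prod6 k₀ l1 m1 l2 m2 l3 m3 l4 m4 ε ^ ((1:ℝ)/4)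
          * brkt k₀ l1 m1 l2 m2 ε * brkt k₀ l3 m3 l4 m4 ε
          * (1/disp g k₀ l1 m1 l2 m2 ε + 1/disp g k₀ l3 m3 l4 m4 ε))
        - (-(Real.sqrt 2 + 1) * (k₀^3/(16*Real.pi^2))
            + -(Real.sqrt 2 + 1) * (k₀^3/(16*Real.pi^2)) * (3*(l1+l2+l3+l4)/(4*k₀)) * ε)) := by
    funext ε
    rw [coefIII_eq_scalar g k₀ l1 m1 l2 m2 l3 m3 l4 m4 ε]
    dsimp only
    ring
  rw [hfun]
  exact main
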